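/- arXiv:1912.12057 — 2 statements merged into one kernel-verified Lean document; each statement's English description precedes it below -/
import Mathlib

section
/- Let u ∈ ℝ³ be a unit vector, θ ∈ ℝ, and let ψ ∈ ℂ⁴ satisfy the absorbing boundary condition (u·α + θβ)ψ = √(1+θ²)·ψ, where α, β are the Dirac matrices. Then the current component u·j = ψ†(u·α)ψ satisfies u·j = √(1+θ²)·|ψ|² - θ·ψ†βψ ≥ (√(1+θ²) - |θ|)·|ψ|² ≥ 0, i.e., the probability current through the boundary is outward-pointing. -/
/-- If `ψ ∈ ℂ⁴` satisfies the absorbing boundary condition `(u·α + θβ)ψ = √(1+θ²)ψ`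
for Dirac matrices `α, β`, a unit vector `u ∈ ℝ³` and `θ ∈ ℝ`, then the current
component `u·j = ψ†(u·α)ψ` satisfies
`u·j = √(1+θ²)|ψ|² - θ ψ†βψ ≥ (√(1+θ²) - |θ|)|ψ|² ≥ 0`. -/
theorem stmt8 (α : Fin 3 → Matrix (Fin 4) (Fin 4) ℂ) (β : Matrix (Fin 4) (Fin 4) ℂ)
    (hαherm : ∀ j, (α j).IsHermitian) (hβherm : β.IsHermitian)
    (hαα : ∀ j k, α j * α k + α k * α j = if j = k then (2 : ℂ) • 1 else 0)
    (hαβ : ∀ j, α j * β + β * α j = 0) (hβ2 : β * β = 1)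
    (u : Fin 3 → ℝ) (hu : ∑ i, u i ^ 2 = 1) (θ : ℝ)
    (ψ : Fin 4 → ℂ)
    (hbc : (∑ i, (u i : ℂ) • α i + (θ : ℂ) • β).mulVec ψ
        = ((Real.sqrt (1 + θ ^ 2) : ℝ) : ℂ) • ψ) :
    (dotProduct (star ψ) ((∑ i, (u i : ℂ) • α i).mulVec ψ)).re
        = Real.sqrt (1 + θ ^ 2) * (dotProduct (star ψ) ψ).re
          - θ * (dotProduct (star ψ) (β.mulVec ψ)).re ∧
    (Real.sqrt (1 + θ ^ 2) - |θ|) * (dotProduct (star ψ) ψ).re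
        ≤ (dotProduct (star ψ) ((∑ i, (u i : ℂ) • α i).mulVec ψ)).re ∧
    0 ≤ (dotProduct (star ψ) ((∑ i, (u i : ℂ) • α i).mulVec ψ)).re := by
  set s : ℝ := Real.sqrt (1 + θ ^ 2) with hs
  set A : Matrix (Fin 4) (Fin 4) ℂ := ∑ i, (u i : ℂ) • α i with hA
  -- rewrite the boundary condition
  have hAψ : A.mulVec ψ = (s : ℂ) • ψ - (θ : ℂ) • β.mulVec ψ := by
    have := hbc
    rw [Matrix.add_mulVec, Matrix.smul_mulVec] at this
    linear_combination (norm := module) this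
  have hdot : dotProduct (star ψ) (A.mulVec ψ)
      = (s : ℂ) * dotProduct (star ψ) ψ
        - (θ : ℂ) * dotProduct (star ψ) (β.mulVec ψ) := by
    rw [hAψ, dotProduct_sub, dotProduct_smul, dotProduct_smul]
    simp [smul_eq_mul]
  have hre : (dotProduct (star ψ) (A.mulVec ψ)).re
      = s * (dotProduct (star ψ) ψ).re
        - θ * (dotProduct (star ψ) (β.mulVec ψ)).re := by
    rw [hdot]
    simp [Complex.sub_re, Complex.mul_re]
  -- Cauchy-Schwarz setup in EuclideanSpace
  set x : EuclideanSpace ℂ (Fin 4) := (WithLp.equiv 2 (Fin 4 → ℂ)).symm ψ with hx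
  set y : EuclideanSpace ℂ (Fin 4) := (WithLp.equiv 2 (Fin 4 → ℂ)).symm (β.mulVec ψ) with hy
  have hinner : @inner ℂ _ _ x y = dotProduct (star ψ) (β.mulVec ψ) :=
    (EuclideanSpace.inner_toLp_toLp ψ (β.mulVec ψ)).trans (dotProduct_comm _ _)
  have hinnerxx : @inner ℂ _ _ x x = dotProduct (star ψ) ψ :=
    (EuclideanSpace.inner_toLp_toLp ψ ψ).trans (dotProduct_comm _ _)
  have hinneryy : @inner ℂ _ _ y y = dotProduct (star ψ) ψ := by
    have h1 : @inner ℂ _ _ y y = dotProduct (star (β.mulVec ψ)) (β.mulVec ψ) :=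
      (EuclideanSpace.inner_toLp_toLp _ _).trans (dotProduct_comm _ _)
    rw [h1, Matrix.star_mulVec, Matrix.dotProduct_mulVec, Matrix.vecMul_vecMul,
      hβherm.eq, hβ2, Matrix.vecMul_one]
  have hnx : ‖x‖ ^ 2 = (dotProduct (star ψ) ψ).re := by
    rw [← hinnerxx]
    exact (@inner_self_eq_norm_sq ℂ _ _ _ _ x).symm
  have hny : ‖y‖ ^ 2 = (dotProduct (star ψ) ψ).re := by
    rw [← hinneryy]
    exact (@inner_self_eq_norm_sq ℂ _ _ _ _ y).symm
  have hnxy : ‖y‖ = ‖x‖ := by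
    have := hnx.trans hny.symm
    nlinarith [norm_nonneg x, norm_nonneg y]
  have hCS : ‖@inner ℂ _ _ x y‖ ≤ ‖x‖ * ‖y‖ := norm_inner_le_norm x y
  have hbound : |(dotProduct (star ψ) (β.mulVec ψ)).re|
      ≤ (dotProduct (star ψ) ψ).re := by
    calc |(dotProduct (star ψ) (β.mulVec ψ)).re|
        ≤ ‖dotProduct (star ψ) (β.mulVec ψ)‖ := Complex.abs_re_le_norm _
      _ = ‖@inner ℂ _ _ x y‖ := by rw [hinner]
      _ ≤ ‖x‖ * ‖y‖ := hCS
      _ = ‖x‖ ^ 2 := by rw [hnxy]; ring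
      _ = (dotProduct (star ψ) ψ).re := hnx
  have hn0 : 0 ≤ (dotProduct (star ψ) ψ).re := by
    rw [← hnx]; positivity
  have hsθ : |θ| ≤ s := by
    rw [hs, ← Real.sqrt_sq_eq_abs]
    exact Real.sqrt_le_sqrt (by linarith)
  have hθb : θ * (dotProduct (star ψ) (β.mulVec ψ)).re
      ≤ |θ| * (dotProduct (star ψ) ψ).re := by
    calc θ * (dotProduct (star ψ) (β.mulVec ψ)).re
        ≤ |θ * (dotProduct (star ψ) (β.mulVec ψ)).re| := le_abs_self _
      _ = |θ| * |(dotProduct (star ψ) (β.mulVec ψ)).re| := abs_mul _ _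
      _ ≤ |θ| * (dotProduct (star ψ) ψ).re :=
          mul_le_mul_of_nonneg_left hbound (abs_nonneg θ)
  refine ⟨hre, ?_, ?_⟩
  · rw [hre]; nlinarith
  · rw [hre]; nlinarith
end

section
/- Let M_f be the maximal multiplication operator by a measurable function f : S → ℂ on L²(S, μ). Then its adjoint (M_f)* equals the multiplication operator M_{f̄} by the complex conjugate of f, with the same domain D = {φ ∈ L²(S, μ) : fφ ∈ L²(S, μ)}. -/
open MeasureTheory

open scoped ComplexConjugate

/-- The adjoint of the maximal multiplication operator `M_f` by a measurable
`f : S → ℂ` on `L²(S,μ)` is the multiplication operator by the complex conjugate `f̄`,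
with the same (maximal) domain `{φ ∈ L² : fφ ∈ L²}`. -/
theorem stmt11 {S : Type*} [MeasurableSpace S] (μ : Measure S) [SigmaFinite μ]
    (f : S → ℂ) (hf : Measurable f)
    (T : Lp ℂ 2 μ →ₗ.[ℂ] Lp ℂ 2 μ)
    (hTdom : ∀ φ : Lp ℂ 2 μ, φ ∈ T.domain ↔ MemLp (fun s => f s * φ s) 2 μ)
    (hT : ∀ φ : T.domain, (T φ : S → ℂ) =ᵐ[μ] fun s => f s * (φ : Lp ℂ 2 μ) s)
    (hdense : Dense (T.domain : Set (Lp ℂ 2 μ))) :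
    (∀ ψ : Lp ℂ 2 μ, ψ ∈ T.adjoint.domain ↔ ψ ∈ T.domain) ∧
    (∀ ψ : T.adjoint.domain,
      (T.adjoint ψ : S → ℂ) =ᵐ[μ]
        fun s => (starRingEnd ℂ) (f s) * (ψ : Lp ℂ 2 μ) s) := by
  classical
  have hconjf : Measurable fun s => (starRingEnd ℂ) (f s) := by
    show Measurable fun s => star (f s)
    exact continuous_star.measurable.comp hf
  -- Key construction: if fψ ∈ L², then w := conj f · ψ (as an Lp element) satisfies
  -- ⟪w, χ⟫ = ⟪ψ, T χ⟫ for all χ in the domain of T.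
  have key : ∀ (ψ : Lp ℂ 2 μ), MemLp (fun s => f s * ψ s) 2 μ →
      ∃ w : Lp ℂ 2 μ, ((w : S → ℂ) =ᵐ[μ] fun s => (starRingEnd ℂ) (f s) * ψ s) ∧
        ∀ χ : T.domain, (inner ℂ w (χ : Lp ℂ 2 μ) : ℂ) = inner ℂ ψ (T χ) := by
    intro ψ hmem
    have hmemc : MemLp (fun s => (starRingEnd ℂ) (f s) * ψ s) 2 μ := by
      refine hmem.of_le (hconjf.aestronglyMeasurable.mul (Lp.aestronglyMeasurable ψ))
        (Filter.Eventually.of_forall fun s => ?_)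
      simp [norm_mul]
    refine ⟨hmemc.toLp _, hmemc.coeFn_toLp, fun χ => ?_⟩
    rw [L2.inner_def, L2.inner_def]
    refine integral_congr_ae ?_
    filter_upwards [hmemc.coeFn_toLp, hT χ] with s h1 h2
    simp only [RCLike.inner_apply, h1, h2, map_mul, Complex.conj_conj]
    ring
  -- Hard direction: membership in the adjoint domain forces fψ ∈ L².
  have hard : ∀ ψ : Lp ℂ 2 μ, ψ ∈ T.adjoint.domain → MemLp (fun s => f s * ψ s) 2 μ := by
    intro ψ hψ
    set ψ' : T.adjoint.domain := ⟨ψ, hψ⟩ with hψ'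
    set η : Lp ℂ 2 μ := T.adjoint ψ' with hη
    set A : ℕ → Set S := fun n => {s | ‖f s‖ ≤ (n : ℝ)} with hA
    have hAmeas : ∀ n, MeasurableSet (A n) := fun n =>
      measurableSet_le hf.norm measurable_const
    set χf : ℕ → S → ℂ :=
      fun n => (A n).indicator (fun s => (starRingEnd ℂ) (f s) * ψ s) with hχf
    have hχsm : ∀ n, AEStronglyMeasurable (χf n) μ := fun n =>
      (hconjf.aestronglyMeasurable.mul (Lp.aestronglyMeasurable ψ)).indicator (hAmeas n)
    have hχmem : ∀ n, MemLp (χf n) 2 μ := by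
      intro n
      refine ((Lp.memLp ψ).const_mul (n : ℂ)).of_le (hχsm n)
        (Filter.Eventually.of_forall fun s => ?_)
      by_cases h : s ∈ A n
      · rw [hχf]
        simp only [Set.indicator_of_mem h, norm_mul, RCLike.norm_conj, Complex.norm_natCast]
        exact mul_le_mul_of_nonneg_right h (norm_nonneg _)
      · rw [hχf]
        simp only [Set.indicator_of_notMem h, norm_zero]
        positivity
    have hfχmem : ∀ n, MemLp (fun s => f s * χf n s) 2 μ := by
      intro n
      refine ((Lp.memLp ψ).const_mul ((n : ℂ) * n)).of_le
        (hf.aestronglyMeasurable.mul (hχsm n)) (Filter.Eventually.of_forall fun s => ?_)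
      by_cases h : s ∈ A n
      · rw [hχf]
        simp only [Set.indicator_of_mem h, norm_mul, RCLike.norm_conj, Complex.norm_natCast]
        rw [← mul_assoc]
        have h0 : (0:ℝ) ≤ ‖ψ s‖ := norm_nonneg _
        have h1 : (0:ℝ) ≤ ‖f s‖ := norm_nonneg _
        have hn : ‖f s‖ ≤ (n:ℝ) := h
        exact mul_le_mul_of_nonneg_right (mul_le_mul hn hn h1 (h1.trans hn)) h0
      · rw [hχf]
        simp only [Set.indicator_of_notMem h, mul_zero, norm_zero]
        positivity
    set χL : ℕ → Lp ℂ 2 μ := fun n => (hχmem n).toLp _ with hχL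
    have hχdom : ∀ n, χL n ∈ T.domain := by
      intro n
      rw [hTdom]
      refine (hfχmem n).ae_eq ?_
      filter_upwards [(hχmem n).coeFn_toLp] with s hs
      rw [hs]
    set χT : ℕ → T.domain := fun n => ⟨χL n, hχdom n⟩ with hχT
    -- the uniform norm bound ‖χL n‖ ≤ ‖η‖
    have hbound : ∀ n, ‖χL n‖ ≤ ‖η‖ := by
      intro n
      have hadj : (inner ℂ (η : Lp ℂ 2 μ) (χL n) : ℂ) = inner ℂ (ψ : Lp ℂ 2 μ) (T (χT n)) :=
        LinearPMap.adjoint_isFormalAdjoint hdense ψ' (χT n)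
      have hself : (inner ℂ (ψ : Lp ℂ 2 μ) (T (χT n)) : ℂ) = inner ℂ (χL n) (χL n) := by
        rw [L2.inner_def, L2.inner_def]
        refine integral_congr_ae ?_
        filter_upwards [hT (χT n), (hχmem n).coeFn_toLp] with s h1 h2
        have h1' : (T (χT n) : S → ℂ) s = f s * (χL n : S → ℂ) s := h1
        have h2' : (χL n : S → ℂ) s = χf n s := h2
        simp only [RCLike.inner_apply, h1', h2']
        by_cases h : s ∈ A n
        · rw [hχf]
          simp only [Set.indicator_of_mem h, map_mul, Complex.conj_conj]
          ring
        · rw [hχf]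
          simp [Set.indicator_of_notMem h]
      have e1 : (inner ℂ (χL n) (χL n) : ℂ) = inner ℂ η (χL n) := by
        rw [← hself]; exact hadj.symm
      have h1 : ‖χL n‖ ^ 2 ≤ ‖η‖ * ‖χL n‖ := by
        calc ‖χL n‖ ^ 2 = ‖(inner ℂ (χL n) (χL n) : ℂ)‖ := by
              rw [inner_self_eq_norm_sq_to_K]
              simp
          _ = ‖(inner ℂ η (χL n) : ℂ)‖ := by rw [e1]
          _ ≤ ‖η‖ * ‖χL n‖ := norm_inner_le_norm _ _
      by_cases h0 : ‖χL n‖ = 0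
      · rw [h0]; exact norm_nonneg _
      · have hpos : 0 < ‖χL n‖ := lt_of_le_of_ne (norm_nonneg _) (Ne.symm h0)
        nlinarith
    have hsn : ∀ n, eLpNorm (χf n) 2 μ ≤ ENNReal.ofReal ‖η‖ := by
      intro n
      have ht : (eLpNorm (χf n) 2 μ).toReal ≤ ‖η‖ := by
        rw [← Lp.norm_toLp _ (hχmem n)]
        exact hbound n
      exact (ENNReal.le_ofReal_iff_toReal_le (hχmem n).eLpNorm_ne_top (norm_nonneg _)).2 ht
    -- pass to the untruncated limit
    set χg : ℕ → S → ℂ := fun n => (A n).indicator (fun s => f s * ψ s) with hχg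
    have hχgsm : ∀ n, AEStronglyMeasurable (χg n) μ := fun n =>
      (hf.aestronglyMeasurable.mul (Lp.aestronglyMeasurable ψ)).indicator (hAmeas n)
    have hgn : ∀ n, eLpNorm (χg n) 2 μ = eLpNorm (χf n) 2 μ := by
      intro n
      refine eLpNorm_congr_norm_ae (Filter.Eventually.of_forall fun s => ?_)
      by_cases h : s ∈ A n
      · rw [hχg, hχf]
        simp [Set.indicator_of_mem h, norm_mul]
      · rw [hχg, hχf]
        simp [Set.indicator_of_notMem h]
    have hlim : ∀ s, Filter.Tendsto (fun n => χg n s) Filter.atTop (nhds (f s * ψ s)) := by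
      intro s
      obtain ⟨N, hN⟩ := exists_nat_ge ‖f s‖
      refine tendsto_atTop_of_eventually_const (i₀ := N) fun n hn => ?_
      have : s ∈ A n := le_trans hN (Nat.cast_le.2 hn)
      rw [hχg]
      exact Set.indicator_of_mem this _
    have hle : eLpNorm (fun s => f s * ψ s) 2 μ ≤ ENNReal.ofReal ‖η‖ := by
      refine le_trans
        (Lp.eLpNorm_lim_le_liminf_eLpNorm hχgsm _ (Filter.Eventually.of_forall hlim)) ?_
      refine le_trans (Filter.liminf_le_liminf (Filter.Eventually.of_forall
        (fun n => (hgn n).le.trans (hsn n)))) ?_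
      simp [Filter.liminf_const]
    exact ⟨hf.aestronglyMeasurable.mul (Lp.aestronglyMeasurable ψ),
      lt_of_le_of_lt hle ENNReal.ofReal_lt_top⟩
  constructor
  · intro ψ
    constructor
    · intro hψ
      exact (hTdom ψ).2 (hard ψ hψ)
    · intro hψ
      obtain ⟨w, hw, hinner⟩ := key ψ ((hTdom ψ).1 hψ)
      exact LinearPMap.mem_adjoint_domain_of_exists ψ ⟨w, hinner⟩
  · intro ψ
    obtain ⟨w, hw, hinner⟩ := key (ψ : Lp ℂ 2 μ) (hard _ ψ.2)
    have : T.adjoint ψ = w := LinearPMap.adjoint_apply_eq hdense ψ fun χ => hinner χ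
    rw [this]
    exact hw
end
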